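/- Let E be a finite-dimensional real inner product space and let x ∈ E be a nonzero vector. Then the linear span of the set of orthogonal projections P_y onto the lines ℝ • y, where y ranges over all unit vectors of E orthogonal to x, equals the space S_x of all self-adjoint linear operators S : E → E satisfying S x = 0. -/

import Mathlib

open scoped RealInnerProductSpace

noncomputable def projLine {E : Type*} [NormedAddCommGroup E] [InnerProductSpace ℝ E]
    (y : E) : E →ₗ[ℝ] E where
  toFun v := ⟪v, y⟫ • y
  map_add' u v := by simp [inner_add_left, add_smul]
  map_smul' c v := by simp [real_inner_smul_left, smul_smul]

@[simp] lemma projLine_apply {E : Type*} [NormedAddCommGroup E] [InnerProductSpace ℝ E]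
    (y v : E) : projLine y v = ⟪v, y⟫ • y := rfl

/-- First step of the proof of Claim A.2: for a nonzero vector `x`, the orthogonal
projections onto lines spanned by unit vectors orthogonal to `x` span, as a vector space,
the space `S_x` of all self-adjoint operators vanishing at `x`. -/
theorem span_projections_eq_selfAdjoint_vanishing
    {E : Type*} [NormedAddCommGroup E] [InnerProductSpace ℝ E] [FiniteDimensional ℝ E]
    (x : E) (hx : x ≠ 0) :
    (Submodule.span ℝ
        {P : E →ₗ[ℝ] E | ∃ y : E, ‖y‖ = 1 ∧ ⟪y, x⟫ = 0 ∧ ∀ v : E, P v = ⟪v, y⟫ • y}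
      : Set (E →ₗ[ℝ] E)) =
      {S : E →ₗ[ℝ] E | S.IsSymmetric ∧ S x = 0} := by
  set K : Submodule ℝ E := (ℝ ∙ x)ᗮ with hK
  let M : Submodule ℝ (E →ₗ[ℝ] E) :=
    { carrier := {S : E →ₗ[ℝ] E | S.IsSymmetric ∧ S x = 0}
      add_mem' := fun ha hb => ⟨ha.1.add hb.1, by simp [LinearMap.add_apply, ha.2, hb.2]⟩
      zero_mem' := ⟨LinearMap.IsSymmetric.zero, rfl⟩
      smul_mem' := fun c S hS => ⟨hS.1.smul (star_trivial c), by simp [hS.2]⟩ }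
  apply le_antisymm
  · have hgen : {P : E →ₗ[ℝ] E | ∃ y : E, ‖y‖ = 1 ∧ ⟪y, x⟫ = 0 ∧ ∀ v : E, P v = ⟪v, y⟫ • y}
        ⊆ (M : Set _) := by
      rintro P ⟨y, hy1, hy2, hy3⟩
      refine ⟨fun u v => ?_, ?_⟩
      · rw [hy3, hy3, real_inner_smul_left, real_inner_smul_right, real_inner_comm y v]
        ring
      · rw [hy3, real_inner_comm, hy2, zero_smul]
    exact fun P hP => Submodule.span_le.mpr hgen hP
  · rintro S ⟨hsym, hSx⟩
    have hmap : ∀ v ∈ K, S v ∈ K := by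
      intro v _
      rw [hK, Submodule.mem_orthogonal]
      rintro u hu
      obtain ⟨c, rfl⟩ := Submodule.mem_span_singleton.mp hu
      rw [real_inner_smul_left, ← hsym, hSx, inner_zero_left, mul_zero]
    let T : K →ₗ[ℝ] K := S.restrict hmap
    have hT : T.IsSymmetric := fun u v => by
      simp only [Submodule.coe_inner, LinearMap.restrict_coe_apply, T]
      exact hsym u v
    set b := hT.eigenvectorBasis rfl with hb
    set μ := hT.eigenvalues (n := Module.finrank ℝ K) rfl with hμ
    have key : S = ∑ i, μ i • projLine ((b i : E)) := by
      ext v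
      obtain ⟨p, hp, q, hq, rfl⟩ := (ℝ ∙ x).exists_add_mem_mem_orthogonal v
      have hSp : S p = 0 := by
        obtain ⟨c, rfl⟩ := Submodule.mem_span_singleton.mp hp
        rw [map_smul, hSx, smul_zero]
      have hpb : ∀ i, ⟪p, ((b i : K) : E)⟫ = 0 := fun i =>
        (Submodule.mem_orthogonal _ _).mp (b i).2 p hp
      have h1 : (⟨q, hq⟩ : K) = ∑ i, (⟪((b i : K) : E), q⟫ : ℝ) • b i :=
        (b.sum_repr' ⟨q, hq⟩).symm
      have h2 : S q = ((T ⟨q, hq⟩ : K) : E) := (LinearMap.restrict_coe_apply S hmap ⟨q, hq⟩).symm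
      have hSq : S q = ∑ i, (⟪((b i : K) : E), q⟫ : ℝ) • (μ i • ((b i : K) : E)) := by
        rw [h2, h1, map_sum]
        push_cast
        refine Finset.sum_congr rfl fun i _ => ?_
        rw [map_smul]
        rw [hb, hμ, hT.apply_eigenvectorBasis rfl i]
        norm_cast
      rw [map_add, hSp, zero_add, hSq]
      simp only [LinearMap.sum_apply, LinearMap.smul_apply, projLine_apply,
        inner_add_left, hpb, zero_add]
      refine Finset.sum_congr rfl fun i _ => ?_
      rw [real_inner_comm, smul_smul, smul_smul, mul_comm]
    rw [key]
    refine Submodule.sum_mem _ fun i _ => Submodule.smul_mem _ _ ?_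
    refine Submodule.subset_span ⟨(b i : E), ?_, ?_, fun v => rfl⟩
    · exact b.orthonormal.1 i
    · exact (Submodule.mem_orthogonal' _ _).mp (b i).2 x (Submodule.mem_span_singleton_self x)
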